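/- Let F be a convex class of probability measures on Ω and let T : F → A ⊆ ℝ^k be linear (i.e., T((1−λ)F + λG) = (1−λ)T(F) + λT(G) for all F, G ∈ F and λ ∈ [0,1]) and surjective onto A. Then any strictly F-consistent scoring function S : A × Ω → ℝ for T is strictly F-order-sensitive on line segments for T. -/

import Mathlib

open MeasureTheory ENNReal

noncomputable def escore {α Ω : Type*} [MeasurableSpace Ω]
    (S : α → Ω → ℝ) (x : α) (F : Measure Ω) : ℝ :=
  ∫ y, S x y ∂F

/-- The mixture `(1 - lam) • F + lam • G` of two measures. -/
noncomputable def mix {Ω : Type*} [MeasurableSpace Ω]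
    (F G : Measure Ω) (lam : ℝ) : Measure Ω :=
  ENNReal.ofReal (1 - lam) • F + ENNReal.ofReal lam • G

/-- The class `𝓕` is convex (closed under mixtures). -/
def MixConvex {Ω : Type*} [MeasurableSpace Ω] (𝓕 : Set (Measure Ω)) : Prop :=
  ∀ F ∈ 𝓕, ∀ G ∈ 𝓕, ∀ lam ∈ Set.Icc (0:ℝ) 1, mix F G lam ∈ 𝓕

/-- `S` is an `𝓕`-consistent scoring function for `T` on the action domain `A`. -/
def Consistent {α Ω : Type*} [MeasurableSpace Ω]
    (𝓕 : Set (Measure Ω)) (A : Set α) (T : Measure Ω → α) (S : α → Ω → ℝ) : Prop :=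
  ∀ F ∈ 𝓕, ∀ x ∈ A, escore S (T F) F ≤ escore S x F

/-- `S` is a strictly `𝓕`-consistent scoring function for `T` on the action domain `A`. -/
def StrictlyConsistent {α Ω : Type*} [MeasurableSpace Ω]
    (𝓕 : Set (Measure Ω)) (A : Set α) (T : Measure Ω → α) (S : α → Ω → ℝ) : Prop :=
  Consistent 𝓕 A T S ∧
    ∀ F ∈ 𝓕, ∀ x ∈ A, escore S x F = escore S (T F) F → x = T F

/-- The `ℓ^p`-norm on `ℝ^k`, for `p ∈ [1, ∞]` (given as an extended real). -/
noncomputable def lpNorm {k : ℕ} (p : ℝ≥0∞) (x : Fin k → ℝ) : ℝ :=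
  if p = ⊤ then ⨆ i, |x i| else (∑ i, |x i| ^ p.toReal) ^ (1 / p.toReal)

/-- `S` is metrically `𝓕`-order-sensitive for `T` relative to the norm `nrm`. -/
def MetricallyOS {α Ω : Type*} [MeasurableSpace Ω] [Sub α]
    (𝓕 : Set (Measure Ω)) (A : Set α) (T : Measure Ω → α)
    (S : α → Ω → ℝ) (nrm : α → ℝ) : Prop :=
  ∀ F ∈ 𝓕, ∀ x ∈ A, ∀ z ∈ A,
    nrm (x - T F) ≤ nrm (z - T F) → escore S x F ≤ escore S z F

/-- `S` is strictly metrically `𝓕`-order-sensitive for `T` relative to the norm `nrm`. -/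
def StrictlyMetricallyOS {α Ω : Type*} [MeasurableSpace Ω] [Sub α]
    (𝓕 : Set (Measure Ω)) (A : Set α) (T : Measure Ω → α)
    (S : α → Ω → ℝ) (nrm : α → ℝ) : Prop :=
  MetricallyOS 𝓕 A T S nrm ∧
    ∀ F ∈ 𝓕, ∀ x ∈ A, ∀ z ∈ A,
      nrm (x - T F) < nrm (z - T F) → escore S x F < escore S z F

/-- `S` is `𝓕`-order-sensitive on line segments for `T`: for every unit vector `v`
(with respect to the Euclidean norm), `s ↦ S̄(T F + s • v, F)` is increasing on
`{s ∈ [0,∞) : T F + s • v ∈ A}`. -/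
def LineSegmentOS {Ω : Type*} [MeasurableSpace Ω] {k : ℕ}
    (𝓕 : Set (Measure Ω)) (A : Set (Fin k → ℝ)) (T : Measure Ω → (Fin k → ℝ))
    (S : (Fin k → ℝ) → Ω → ℝ) : Prop :=
  ∀ F ∈ 𝓕, ∀ v : Fin k → ℝ, lpNorm 2 v = 1 →
    MonotoneOn (fun s => escore S (T F + s • v) F)
      {s : ℝ | 0 ≤ s ∧ T F + s • v ∈ A}

/-- `S` is strictly `𝓕`-order-sensitive on line segments for `T`. -/
def StrictlyLineSegmentOS {Ω : Type*} [MeasurableSpace Ω] {k : ℕ}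
    (𝓕 : Set (Measure Ω)) (A : Set (Fin k → ℝ)) (T : Measure Ω → (Fin k → ℝ))
    (S : (Fin k → ℝ) → Ω → ℝ) : Prop :=
  ∀ F ∈ 𝓕, ∀ v : Fin k → ℝ, lpNorm 2 v = 1 →
    StrictMonoOn (fun s => escore S (T F + s • v) F)
      {s : ℝ | 0 ≤ s ∧ T F + s • v ∈ A}

lemma escore_mix {Ω : Type*} [MeasurableSpace Ω] {α : Type*}
    (S : α → Ω → ℝ) (x : α) (F G : Measure Ω) {lam : ℝ}
    (h0 : 0 ≤ lam) (h1 : lam ≤ 1)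
    (hF : Integrable (S x) F) (hG : Integrable (S x) G) :
    escore S x (mix F G lam) = (1 - lam) * escore S x F + lam * escore S x G := by
  unfold escore mix
  rw [integral_add_measure (hF.smul_measure ofReal_ne_top)
      (hG.smul_measure ofReal_ne_top),
    integral_smul_measure, integral_smul_measure,
    ENNReal.toReal_ofReal (by linarith), ENNReal.toReal_ofReal h0]
  simp [smul_eq_mul]

/-- If `𝓕` is convex and `T` is linear (affine in mixtures) and
surjective onto `A`, then any strictly `𝓕`-consistent scoring function for `T` is
strictly `𝓕`-order-sensitive on line segments for `T`. -/
theorem statement15 {Ω : Type*} [MeasurableSpace Ω] {k : ℕ}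
    (𝓕 : Set (Measure Ω)) (hprob : ∀ F ∈ 𝓕, IsProbabilityMeasure F)
    (hconv : MixConvex 𝓕)
    (A : Set (Fin k → ℝ)) (T : Measure Ω → (Fin k → ℝ))
    (hTA : ∀ F ∈ 𝓕, T F ∈ A)
    (hsurj : ∀ x ∈ A, ∃ F ∈ 𝓕, T F = x)
    (hlin : ∀ F ∈ 𝓕, ∀ G ∈ 𝓕, ∀ lam ∈ Set.Icc (0:ℝ) 1,
      T (mix F G lam) = (1 - lam) • T F + lam • T G)
    (S : (Fin k → ℝ) → Ω → ℝ)
    (hSint : ∀ x ∈ A, ∀ F ∈ 𝓕, Integrable (S x) F)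
    (hS : StrictlyConsistent 𝓕 A T S) :
    StrictlyLineSegmentOS 𝓕 A T S := by
  obtain ⟨hcons, hstrict⟩ := hS
  intro F hF v hv s1 hs1 s2 hs2 hlt
  obtain ⟨hs1nn, hx1A⟩ := hs1
  obtain ⟨hs2nn, hx2A⟩ := hs2
  have hs2pos : 0 < s2 := lt_of_le_of_lt hs1nn hlt
  set x1 := T F + s1 • v with hx1
  set x2 := T F + s2 • v with hx2
  have hvne : v ≠ 0 := by
    intro h
    rw [h] at hv
    simp [_root_.lpNorm, Real.zero_rpow] at hv
  have hx12 : x2 ≠ x1 := by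
    intro h
    have h2 : s2 • v = s1 • v := add_left_cancel h
    have : (s2 - s1) • v = 0 := by rw [sub_smul, h2, sub_self]
    rcases smul_eq_zero.mp this with h3 | h3
    · exact absurd (sub_eq_zero.mp h3) (ne_of_gt hlt)
    · exact hvne h3
  obtain ⟨G, hG, hTG⟩ := hsurj x2 hx2A
  set lam := s1 / s2 with hlam
  have hlam0 : 0 ≤ lam := div_nonneg hs1nn hs2pos.le
  have hlam1 : lam < 1 := (div_lt_one hs2pos).mpr hlt
  have hlamIcc : lam ∈ Set.Icc (0:ℝ) 1 := ⟨hlam0, hlam1.le⟩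
  have hFl : mix F G lam ∈ 𝓕 := hconv F hF G hG lam hlamIcc
  have hTFl : T (mix F G lam) = x1 := by
    rw [hlin F hF G hG lam hlamIcc, hTG, hx1]
    have hls : lam * s2 = s1 := div_mul_cancel₀ s1 hs2pos.ne'
    rw [smul_add, smul_smul, hls, sub_smul, one_smul]
    abel
  have ha1 : Integrable (S x1) F := hSint x1 hx1A F hF
  have ha2 : Integrable (S x2) F := hSint x2 hx2A F hF
  have hb1 : Integrable (S x1) G := hSint x1 hx1A G hG
  have hb2 : Integrable (S x2) G := hSint x2 hx2A G hG
  have hmix1 : escore S x1 (mix F G lam)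
      = (1 - lam) * escore S x1 F + lam * escore S x1 G :=
    escore_mix S x1 F G hlam0 hlam1.le ha1 hb1
  have hmix2 : escore S x2 (mix F G lam)
      = (1 - lam) * escore S x2 F + lam * escore S x2 G :=
    escore_mix S x2 F G hlam0 hlam1.le ha2 hb2
  -- strict consistency at the mixture
  have hle : escore S x1 (mix F G lam) ≤ escore S x2 (mix F G lam) := by
    have := hcons (mix F G lam) hFl x2 hx2A
    rwa [hTFl] at this
  have hne : escore S x2 (mix F G lam) ≠ escore S x1 (mix F G lam) := by
    intro h
    apply hx12
    have := hstrict (mix F G lam) hFl x2 hx2A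
    rw [hTFl] at this
    exact this h
  have hstrictlt : escore S x1 (mix F G lam) < escore S x2 (mix F G lam) :=
    lt_of_le_of_ne hle (fun h => hne h.symm)
  -- consistency for G (whose value is x2)
  have hbG : escore S x2 G ≤ escore S x1 G := by
    have := hcons G hG x1 hx1A
    rwa [hTG] at this
  rw [hmix1, hmix2] at hstrictlt
  have h1lam : 0 < 1 - lam := by linarith
  show escore S x1 F < escore S x2 F
  nlinarith [mul_le_mul_of_nonneg_left hbG hlam0]
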